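/- Let ψ : ℝ → ℝ be real analytic on all of ℝ, let x₁ ∈ ℝ satisfy ψ(x₁) = x₁ and ψ′(x₁) = 1, and assume that for every integer s ≥ 2 one has lim_{n→∞} (1/n) · (ψⁿ)⁽ˢ⁾(x₁) = 0, where ψⁿ denotes the n-fold iterate of ψ. Then ψ⁽ˢ⁾(x₁) = 0 for every s ≥ 2 and consequently ψ(x) = x for every x ∈ ℝ. -/

import Mathlib

open Filter Topology

open FormalMultilinearSeries in
private lemma comp_coeff_formula (q p : FormalMultilinearSeries ℝ ℝ ℝ) (n : ℕ) :
    (q.comp p).coeff n =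
      ∑ c : Composition n, (∏ i, p.coeff (c.blocksFun i)) * q.coeff c.length := by
  have h0 : (q.comp p).coeff n = ∑ c : Composition n,
      q c.length (p.applyComposition c (1 : Fin n → ℝ)) := by
    simp only [FormalMultilinearSeries.coeff, FormalMultilinearSeries.comp,
      ContinuousMultilinearMap.sum_apply, FormalMultilinearSeries.compAlongComposition_apply]
  rw [h0]
  refine Finset.sum_congr rfl fun c _ => ?_
  have h1 : p.applyComposition c (1 : Fin n → ℝ) = fun i => p.coeff (c.blocksFun i) := by
    funext i
    simp only [FormalMultilinearSeries.applyComposition, FormalMultilinearSeries.coeff]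
    congr
  rw [h1, FormalMultilinearSeries.apply_eq_prod_smul_coeff, smul_eq_mul]

private lemma comp_coeff_key (q p : FormalMultilinearSeries ℝ ℝ ℝ) (s m : ℕ)
    (hq1 : q.coeff 1 = 1) (hp1 : p.coeff 1 = 1)
    (hq : ∀ j, 2 ≤ j → j < s → q.coeff j = 0)
    (hm : 2 ≤ m) (hms : m ≤ s) :
    (q.comp p).coeff m = p.coeff m + q.coeff m := by
  classical
  have hm0 : 0 < m := by omega
  rw [comp_coeff_formula]
  have hsub : ({Composition.single m hm0, Composition.ones m} : Finset (Composition m))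
      ⊆ Finset.univ := Finset.subset_univ _
  rw [← Finset.sum_subset hsub (by
    intro c _ hc
    simp only [Finset.mem_insert, Finset.mem_singleton, not_or] at hc
    have h1 : c.length ≠ 1 := fun h => hc.1 ((Composition.eq_single_iff_length hm0).2 h)
    have h2 : c.length ≠ m := fun h => hc.2 (Composition.eq_ones_iff_length.2 h)
    have h3 : c.length ≤ m := c.length_le
    have h4 : 0 < c.length := c.length_pos_of_pos hm0
    have : q.coeff c.length = 0 := hq _ (by omega) (by omega)
    rw [this, mul_zero])]
  have hne : (Composition.single m hm0) ≠ Composition.ones m := by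
    intro h
    have h5 := Composition.single_length hm0
    rw [h, Composition.ones_length] at h5
    omega
  rw [Finset.sum_pair hne]
  congr 1
  · have h6 : ∀ i : Fin (Composition.single m hm0).length,
        p.coeff ((Composition.single m hm0).blocksFun i) = p.coeff m := by
      intro i; rw [Composition.single_blocksFun]
    rw [Finset.prod_congr rfl (fun i _ => h6 i), Finset.prod_const,
      Composition.single_length hm0, hq1]
    simp
  · have h7 : ∀ i : Fin (Composition.ones m).length,
        p.coeff ((Composition.ones m).blocksFun i) = 1 := by
      intro i; rw [Composition.ones_blocksFun, hp1]
    rw [Finset.prod_congr rfl (fun i _ => h7 i), Finset.prod_const, one_pow,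
      Composition.ones_length, one_mul]

private lemma iteratedDeriv_eq_coeff' {f : ℝ → ℝ} {p : FormalMultilinearSeries ℝ ℝ ℝ} {x : ℝ}
    (h : HasFPowerSeriesAt f p x) (n : ℕ) :
    iteratedDeriv n f x = n.factorial * p.coeff n := by
  obtain ⟨r, hr⟩ := h
  have h2 := hr.factorial_smul (1 : ℝ) n
  rw [iteratedDeriv_eq_iteratedFDeriv, ← h2, nsmul_eq_mul]
  rfl

/-- If `ψ` is real analytic on `ℝ`, `x₁` is a fixed point with `ψ′(x₁) = 1`, and
`(1/n)·(ψⁿ)⁽ˢ⁾(x₁) → 0` for every `s ≥ 2`, then all higher derivatives of `ψ` at `x₁`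
vanish and `ψ` is the identity. -/
theorem stmt13 (ψ : ℝ → ℝ) (x₁ : ℝ)
    (hψ : AnalyticOnNhd ℝ ψ Set.univ)
    (hfix : ψ x₁ = x₁) (hder : deriv ψ x₁ = 1)
    (hlim : ∀ s : ℕ, 2 ≤ s →
      Tendsto (fun n : ℕ => (n : ℝ)⁻¹ * iteratedDeriv s (ψ^[n]) x₁) atTop (𝓝 0)) :
    (∀ s : ℕ, 2 ≤ s → iteratedDeriv s ψ x₁ = 0) ∧ ∀ x : ℝ, ψ x = x := by
  obtain ⟨q, hq⟩ := hψ x₁ (Set.mem_univ x₁)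
  have hfixn : ∀ n, ψ^[n] x₁ = x₁ := fun n => Function.iterate_fixed hfix n
  have hcomp : ∀ n : ℕ, ψ^[n + 1] = ψ ∘ ψ^[n] := by
    intro n; funext x; simp [Function.iterate_succ_apply']
  -- power series of the iterates
  set P : ℕ → FormalMultilinearSeries ℝ ℝ ℝ :=
    fun n => Nat.rec q (fun _ pn => q.comp pn) n with hP_def
  have hP : ∀ n, HasFPowerSeriesAt (ψ^[n + 1]) (P n) x₁ := by
    intro n
    induction n with
    | zero => exact hq
    | succ n ih =>
      rw [hcomp (n + 1)]
      have hq' : HasFPowerSeriesAt ψ q (ψ^[n + 1] x₁) := by rw [hfixn]; exact hq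
      exact hq'.comp ih
  -- first coefficients
  have hq1 : q.coeff 1 = 1 := by
    have h := hq.deriv
    rw [hder] at h
    exact h.symm
  have hdiff : ∀ m, DifferentiableAt ℝ (ψ^[m]) x₁ := by
    intro m
    induction m with
    | zero => simpa using differentiableAt_id'
    | succ m ih =>
      rw [hcomp m]
      have : DifferentiableAt ℝ ψ (ψ^[m] x₁) :=
        (hψ _ (Set.mem_univ _)).differentiableAt
      exact this.comp x₁ ih
  have hd1 : ∀ m, deriv (ψ^[m]) x₁ = 1 := by
    intro m
    induction m with
    | zero => simp
    | succ m ih =>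
      rw [hcomp m, deriv_comp (x := x₁) ((hψ _ (Set.mem_univ _)).differentiableAt) (hdiff m),
        hfixn, hder, ih, one_mul]
  have hP1 : ∀ n, (P n).coeff 1 = 1 := by
    intro n
    have h := (hP n).deriv
    rw [hd1 (n + 1)] at h
    exact h.symm
  -- main claim: all higher coefficients of q vanish
  have main : ∀ s : ℕ, 2 ≤ s → q.coeff s = 0 := by
    intro s
    induction s using Nat.strong_induction_on with
    | _ s IH =>
      intro hs2
      have hIH : ∀ j, 2 ≤ j → j < s → q.coeff j = 0 := fun j h2 hjs => IH j hjs h2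
      -- coefficients of the iterates
      have hPs : ∀ n, ∀ m, 2 ≤ m → m ≤ s → (P n).coeff m = (n + 1 : ℝ) * q.coeff m := by
        intro n
        induction n with
        | zero => intro m _ _; simp [hP_def]
        | succ n ihn =>
          intro m hm2 hms
          have hstep : (P (n + 1)).coeff m = (P n).coeff m + q.coeff m :=
            comp_coeff_key q (P n) s m hq1 (hP1 n) hIH hm2 hms
          rw [hstep, ihn m hm2 hms]
          push_cast
          ring
      -- use the limit hypothesis
      have h1 := hlim s hs2
      have heq : ∀ᶠ n : ℕ in atTop,
          (n : ℝ)⁻¹ * iteratedDeriv s (ψ^[n]) x₁ = (s.factorial : ℝ) * q.coeff s := by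
        filter_upwards [eventually_ge_atTop 1] with n hn
        obtain ⟨m, rfl⟩ : ∃ m, n = m + 1 := ⟨n - 1, by omega⟩
        rw [iteratedDeriv_eq_coeff' (hP m) s, hPs m s hs2 le_rfl]
        have hne : ((m : ℝ) + 1) ≠ 0 := by positivity
        push_cast
        field_simp
      have h2 : Tendsto (fun _ : ℕ => (s.factorial : ℝ) * q.coeff s) atTop (𝓝 0) :=
        (tendsto_congr' heq).mp h1
      have h3 : (s.factorial : ℝ) * q.coeff s = 0 :=
        tendsto_nhds_unique tendsto_const_nhds h2
      have h4 : (s.factorial : ℝ) ≠ 0 := Nat.cast_ne_zero.mpr (Nat.factorial_ne_zero s)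
      exact (mul_eq_zero.mp h3).resolve_left h4
  constructor
  · intro s hs
    rw [iteratedDeriv_eq_coeff' hq s, main s hs, mul_zero]
  · -- ψ is the identity
    have hq0 : q.coeff 0 = x₁ := by
      have := hq.coeff_zero (fun _ => (1 : ℝ))
      rw [hfix] at this
      exact this
    -- ψ equals id near x₁
    obtain ⟨r, hr⟩ := hq
    have hev : ψ =ᶠ[𝓝 x₁] fun x => x := by
      have hball : ∀ y : ℝ, y ∈ EMetric.ball (0 : ℝ) r → ψ (x₁ + y) = x₁ + y := by
        intro y hy
        have hsum := hr.hasSum hy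
        have hval : ∀ n : ℕ, (q n fun _ => y) = if n = 0 then x₁ else if n = 1 then y else 0 := by
          intro n
          rw [FormalMultilinearSeries.apply_eq_pow_smul_coeff, smul_eq_mul]
          match n with
          | 0 => simp [hq0]
          | 1 => simp [hq1]
          | (k + 2) => simp [main (k + 2) (by omega)]
        have hsum2 : HasSum (fun n : ℕ => q n fun _ => y) (x₁ + y) := by
          have : HasSum (fun n : ℕ => if n = 0 then x₁ else if n = 1 then y else (0 : ℝ))
              (x₁ + y) := by
            have hfin : ∀ n ∉ ({0, 1} : Finset ℕ),
                (if n = 0 then x₁ else if n = 1 then y else (0 : ℝ)) = 0 := by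
              intro n hn
              simp only [Finset.mem_insert, Finset.mem_singleton, not_or] at hn
              simp [hn.1, hn.2]
            have := hasSum_sum_of_ne_finset_zero (L := SummationFilter.unconditional ℕ) hfin
            simpa using this
          simpa only [hval] using this
        exact hsum.unique hsum2
      have hrpos : (0 : ENNReal) < r := hr.r_pos
      rw [Filter.eventuallyEq_iff_exists_mem]
      refine ⟨{x : ℝ | x - x₁ ∈ EMetric.ball (0 : ℝ) r}, ?_, ?_⟩
      · refine IsOpen.mem_nhds ?_ ?_
        · exact EMetric.isOpen_ball.preimage (by fun_prop)
        · simp [EMetric.mem_ball, hrpos]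
          exact Metric.mem_eball_self hrpos
      · intro x hx
        have := hball (x - x₁) hx
        simpa using this
    have hid : AnalyticOnNhd ℝ (fun x : ℝ => x) Set.univ := analyticOnNhd_id
    have := hψ.eq_of_eventuallyEq hid hev
    intro x
    exact congrFun this x
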